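/- Fix k ≠ 0, l ≥ 1, with j_l(k) ≠ 0, j_l'(k) ≠ 0, and k j_l(k) j_l'(k) − l(l+1) j_l(k)² + k² j_l'(k)² ≠ 0. Let F²(r) = −(l(l+1))^{3/2} j_l(k)/(k j_l'(k)) · j_l(k r)/r + sqrt(l(l+1))·(j_l(k r)/r + k j_l'(k r)). Then −(F²(1) + (F²)'(1))/F²(1) = k³ j_l(k) j_l'(k) / (k j_l(k) j_l'(k) − l(l+1) j_l(k)² + k² j_l'(k)²). -/

import Mathlib

/-- With `F²` as in Statement 7 and `j` the spherical Bessel function of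
order `l`, the Steklov eigenvalue quotient satisfies
`-(F²(1) + (F²)'(1))/F²(1) = k³ j(k) j'(k)/(k j(k) j'(k) - l(l+1) j(k)² + k² j'(k)²)`. -/
theorem steklov_eigenvalue_first_family_theta_one
    (l : ℕ) (hl : 1 ≤ l) (k : ℝ) (hk : k ≠ 0)
    (j : ℝ → ℝ) (hj : ContDiff ℝ ⊤ j)
    (hODE : ∀ z : ℝ, z ^ 2 * iteratedDeriv 2 j z + 2 * z * deriv j z
      + (z ^ 2 - (l : ℝ) * ((l : ℝ) + 1)) * j z = 0)
    (hjk : j k ≠ 0) (hjk' : deriv j k ≠ 0)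
    (hden : k * j k * deriv j k - (l : ℝ) * ((l : ℝ) + 1) * (j k) ^ 2
      + k ^ 2 * (deriv j k) ^ 2 ≠ 0)
    (F2 : ℝ → ℝ)
    (hF2 : ∀ r : ℝ, F2 r
      = - (Real.sqrt ((l : ℝ) * ((l : ℝ) + 1))) ^ 3 * j k / (k * deriv j k) * (j (k * r) / r)
        + Real.sqrt ((l : ℝ) * ((l : ℝ) + 1)) * (j (k * r) / r + k * deriv j (k * r))) :
    - (F2 1 + deriv F2 1) / F2 1
      = k ^ 3 * j k * deriv j k
        / (k * j k * deriv j k - (l : ℝ) * ((l : ℝ) + 1) * (j k) ^ 2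
            + k ^ 2 * (deriv j k) ^ 2) := by
  have hl1 : (1:ℝ) ≤ (l:ℝ) := by exact_mod_cast hl
  have hLpos : (0:ℝ) < (l : ℝ) * ((l : ℝ) + 1) := by nlinarith
  set L : ℝ := (l : ℝ) * ((l : ℝ) + 1) with hLdef
  set s : ℝ := Real.sqrt L with hsdef
  have hs2 : s ^ 2 = L := Real.sq_sqrt hLpos.le
  have hs0 : s ≠ 0 := Real.sqrt_ne_zero'.mpr hLpos
  have hjd : Differentiable ℝ j := hj.differentiable (by simp)
  have hjinf : ContDiff ℝ ((⊤ : ℕ∞) : WithTop ℕ∞) j := hj.of_le le_top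
  have hj'd : Differentiable ℝ (deriv j) :=
    ((contDiff_infty_iff_deriv.mp hjinf).2).differentiable (by simp)
  have hkr : HasDerivAt (fun r : ℝ => k * r) k 1 := by
    simpa using (hasDerivAt_id (1:ℝ)).const_mul k
  have h1 : HasDerivAt (fun r : ℝ => j (k * r)) (deriv j k * k) 1 := by
    have := ((hjd (k * 1)).hasDerivAt).comp 1 hkr
    exact this.congr_deriv (by simp)
  have h2 : HasDerivAt (fun r : ℝ => deriv j (k * r)) (iteratedDeriv 2 j k * k) 1 := by
    have := ((hj'd (k * 1)).hasDerivAt).comp 1 hkr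
    exact this.congr_deriv (by simp [iteratedDeriv_succ, iteratedDeriv_one])
  have h3 : HasDerivAt (fun r : ℝ => j (k * r) / r) (deriv j k * k - j k) 1 := by
    have := h1.div (hasDerivAt_id (1:ℝ)) one_ne_zero
    exact this.congr_deriv (by simp)
  set A : ℝ := -s ^ 3 * j k / (k * deriv j k) with hAdef
  set D : ℝ := A * (deriv j k * k - j k)
    + s * ((deriv j k * k - j k) + k * (iteratedDeriv 2 j k * k)) with hDdef
  have hF2eq : F2 = fun r : ℝ => A * (j (k * r) / r) + s * (j (k * r) / r + k * deriv j (k * r)) :=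
    funext hF2
  have hF2' : HasDerivAt F2 D 1 := by
    rw [hF2eq]
    exact (h3.const_mul A).add ((h3.add (h2.const_mul k)).const_mul s)
  have hderiv : deriv F2 1 = D := hF2'.deriv
  have hF21 : F2 1 = A * j k + s * (j k + k * deriv j k) := by
    rw [hF2 1]; simp [hAdef]
  have hode := hODE k
  have hA : A * (k * deriv j k) = -s ^ 3 * j k := by
    rw [hAdef]; field_simp
  have hsum : F2 1 + D = -(s * k ^ 2 * j k) := by
    rw [hF21, hDdef]
    linear_combination hA + s * hode - s * j k * hs2
  have hF21v : F2 1 * (k * deriv j k)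
      = s * (k * j k * deriv j k - L * j k ^ 2 + k ^ 2 * (deriv j k) ^ 2) := by
    rw [hF21]
    linear_combination j k * hA - s * j k ^ 2 * hs2
  have hF2ne : F2 1 ≠ 0 := by
    intro h
    apply hden
    have := hF21v
    rw [h, zero_mul] at this
    have := this.symm
    rcases mul_eq_zero.mp this with h1 | h2
    · exact absurd h1 hs0
    · exact h2
  rw [hderiv]
  rw [div_eq_div_iff hF2ne hden]
  have : -(F2 1 + D) = s * k ^ 2 * j k := by rw [hsum]; ring
  rw [this]
  linear_combination (-(k ^ 2 * j k)) * hF21v
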